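/- The radial function g(r) = (1/16)((e^{-r²}-1)/r² - E_1(r²) - 2 log r) satisfies the ODE g''(r) + (3/r) g'(r) = (e^{-r²}-1)/(4r²) for r > 0, with g'(r) = (1/8)(1/r³ - e^{-r²}/r³ - 1/r) and lim_{r→0} g(r) = (γ-1)/16, where γ is the Euler–Mascheroni constant. -/

import Mathlib

open Real Filter

open MeasureTheory Set Topology in
private lemma contOn_f' : ContinuousOn (fun t => Real.exp (-t) / t) {x : ℝ | x ≠ 0} :=
  (Real.continuous_exp.comp continuous_neg).continuousOn.div continuousOn_id (fun _ hx => hx)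

/-- The exponential integral `E₁(r) = ∫_r^∞ e^{-t}/t dt`. -/
noncomputable def expInt (r : ℝ) : ℝ := ∫ t in Set.Ioi r, Real.exp (-t) / t

section aux
open MeasureTheory Set Topology

lemma intOn_exp_div {a : ℝ} (ha : 0 < a) :
    IntegrableOn (fun t => Real.exp (-t) / t) (Set.Ioi a) := by
  have hint : IntegrableOn (fun t => a⁻¹ * Real.exp (-t)) (Set.Ioi a) := by
    have := exp_neg_integrableOn_Ioi a one_pos
    simp only [neg_mul, one_mul] at this
    exact this.const_mul _
  refine hint.mono' (contOn_f'.mono (fun x hx => (lt_trans ha hx).ne') |>.aestronglyMeasurable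
    measurableSet_Ioi) ?_
  filter_upwards [ae_restrict_mem measurableSet_Ioi] with t ht
  have ht0 : 0 < t := lt_trans ha ht
  rw [Real.norm_eq_abs, abs_div, abs_of_pos (exp_pos _), abs_of_pos ht0, inv_mul_eq_div]
  exact div_le_div_of_nonneg_left (exp_pos _).le ha ht.le

lemma expInt_split {a b : ℝ} (ha : 0 < a) (hab : a ≤ b) :
    expInt a = (∫ t in Set.Ioc a b, Real.exp (-t) / t) + expInt b := by
  rw [expInt, expInt, ← setIntegral_union (Set.Ioc_disjoint_Ioi le_rfl)
    measurableSet_Ioi ((intOn_exp_div ha).mono_set Set.Ioc_subset_Ioi_self)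
    ((intOn_exp_div (lt_of_lt_of_le ha hab)))]
  rw [Set.Ioc_union_Ioi_eq_Ioi hab]

lemma expInt_eq (r : ℝ) (hr : 0 < r) :
    expInt r = expInt 1 - ∫ t in (1:ℝ)..r, Real.exp (-t) / t := by
  rcases le_total r 1 with h | h
  · rw [intervalIntegral.integral_symm, intervalIntegral.integral_of_le h,
      expInt_split hr h]
    ring
  · rw [intervalIntegral.integral_of_le h, expInt_split one_pos h]
    ring

lemma hasDerivAt_expInt {r : ℝ} (hr : 0 < r) :
    HasDerivAt expInt (-(Real.exp (-r) / r)) r := by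
  have hprim : HasDerivAt (fun x => ∫ t in (1:ℝ)..x, Real.exp (-t) / t)
      (Real.exp (-r) / r) r := by
    refine intervalIntegral.integral_hasDerivAt_right ?_ ?_ ?_
    · apply ContinuousOn.intervalIntegrable
      refine contOn_f'.mono (fun x hx => ?_)
      have : 0 < x := lt_of_lt_of_le (lt_min one_pos hr) hx.1
      exact this.ne'
    · exact (contOn_f'.mono (fun x (hx : x ∈ Set.Ioi (0:ℝ)) =>
        hx.out.ne')).stronglyMeasurableAtFilter isOpen_Ioi r hr
    · exact ContinuousAt.div ((Real.continuous_exp.comp continuous_neg).continuousAt)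
        continuousAt_id hr.ne'
  have h2 : HasDerivAt (fun x => expInt 1 - ∫ t in (1:ℝ)..x, Real.exp (-t) / t)
      (0 - Real.exp (-r) / r) r := (hasDerivAt_const r (expInt 1)).sub hprim
  rw [zero_sub] at h2
  refine h2.congr_of_eventuallyEq ?_
  filter_upwards [isOpen_Ioi.mem_nhds hr] with x hx
  exact expInt_eq x hx

lemma hasDerivAt_gformula {r : ℝ} (hr : 0 < r) :
    HasDerivAt (fun x => (1 / 16) * ((Real.exp (-x ^ 2) - 1) / x ^ 2 - expInt (x ^ 2) - 2 * Real.log x))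
      ((1 / 8) * (1 / r ^ 3 - Real.exp (-r ^ 2) / r ^ 3 - 1 / r)) r := by
  have hsq : HasDerivAt (fun x : ℝ => x ^ 2) (2 * r) r := by
    simpa using hasDerivAt_pow 2 r
  have hexp : HasDerivAt (fun x : ℝ => Real.exp (-x ^ 2)) (Real.exp (-r ^ 2) * -(2 * r)) r :=
    (Real.hasDerivAt_exp _).comp r hsq.neg
  have hfrac : HasDerivAt (fun x : ℝ => (Real.exp (-x ^ 2) - 1) / x ^ 2)
      (((Real.exp (-r ^ 2) * -(2 * r)) * r ^ 2 - (Real.exp (-r ^ 2) - 1) * (2 * r)) / (r ^ 2) ^ 2) r :=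
    (hexp.sub_const 1).div hsq (by positivity)
  have hEI : HasDerivAt (fun x : ℝ => expInt (x ^ 2)) (-(Real.exp (-r ^ 2) / r ^ 2) * (2 * r)) r :=
    (hasDerivAt_expInt (by positivity)).comp r hsq
  have hlog : HasDerivAt (fun x : ℝ => 2 * Real.log x) (2 * r⁻¹) r :=
    (Real.hasDerivAt_log hr.ne').const_mul 2
  have := (((hfrac.sub hEI).sub hlog).const_mul (1 / 16 : ℝ))
  refine this.congr_deriv ?_
  field_simp
  ring

lemma hasDerivAt_G {r : ℝ} (hr : 0 < r) :
    HasDerivAt (fun x => (1 / 8) * (1 / x ^ 3 - Real.exp (-x ^ 2) / x ^ 3 - 1 / x))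
      ((1 / 8) * (-3 / r ^ 4 + 2 * Real.exp (-r ^ 2) / r ^ 2 + 3 * Real.exp (-r ^ 2) / r ^ 4 + 1 / r ^ 2)) r := by
  have hsq : HasDerivAt (fun x : ℝ => x ^ 2) (2 * r) r := by
    simpa using hasDerivAt_pow 2 r
  have hcube : HasDerivAt (fun x : ℝ => x ^ 3) (3 * r ^ 2) r := by
    simpa using hasDerivAt_pow 3 r
  have hexp : HasDerivAt (fun x : ℝ => Real.exp (-x ^ 2)) (Real.exp (-r ^ 2) * -(2 * r)) r :=
    (Real.hasDerivAt_exp _).comp r hsq.neg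
  have h1 : HasDerivAt (fun x : ℝ => 1 / x ^ 3)
      ((0 * r ^ 3 - 1 * (3 * r ^ 2)) / (r ^ 3) ^ 2) r :=
    (hasDerivAt_const r (1:ℝ)).div hcube (by positivity)
  have h2 : HasDerivAt (fun x : ℝ => Real.exp (-x ^ 2) / x ^ 3)
      (((Real.exp (-r ^ 2) * -(2 * r)) * r ^ 3 - Real.exp (-r ^ 2) * (3 * r ^ 2)) / (r ^ 3) ^ 2) r :=
    hexp.div hcube (by positivity)
  have h3 : HasDerivAt (fun x : ℝ => 1 / x) (-(1 / r ^ 2)) r := by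
    simpa using (hasDerivAt_inv hr.ne')
  have := ((h1.sub h2).sub h3).const_mul (1 / 8 : ℝ)
  refine this.congr_deriv ?_
  field_simp
  ring

lemma gammaInt :
    (∫ t in Set.Ioi (0:ℝ), Real.log t * Real.exp (-t)) = -Real.eulerMascheroniConstant := by
  set I : ℂ := ∫ t : ℝ in Ioi 0, (t:ℂ) ^ ((1:ℂ) - 1) * ((Real.log t : ℂ) * (Real.exp (-t) : ℂ)) with hI
  have hGI : HasDerivAt Complex.GammaIntegral I 1 :=
    Complex.hasDerivAt_GammaIntegral (by norm_num)
  have heq : Complex.Gamma =ᶠ[nhds (1:ℂ)] Complex.GammaIntegral := by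
    have hopen : IsOpen {s : ℂ | 0 < s.re} := isOpen_lt continuous_const Complex.continuous_re
    filter_upwards [hopen.mem_nhds (by norm_num : (0:ℝ) < (1:ℂ).re)] with s hs
    exact Complex.Gamma_eq_integral hs
  have hG : HasDerivAt Complex.Gamma I 1 := hGI.congr_of_eventuallyEq heq
  have hG' : HasDerivAt Complex.Gamma I ((1:ℝ):ℂ) := by norm_num at hG ⊢; exact hG
  have hR : HasDerivAt (fun x : ℝ => (Complex.Gamma x).re) I.re 1 := hG'.real_of_complex
  have hR' : HasDerivAt Real.Gamma I.re 1 := by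
    refine hR.congr_of_eventuallyEq (Eventually.of_forall fun x => ?_)
    simp [Complex.Gamma_ofReal]
  have huniq : I.re = -Real.eulerMascheroniConstant :=
    hR'.unique Real.hasDerivAt_Gamma_one
  have hIval : I = ((∫ t in Ioi (0:ℝ), Real.log t * Real.exp (-t) : ℝ) : ℂ) := by
    have h1 : I = ∫ t : ℝ in Ioi 0, ((Real.log t * Real.exp (-t) : ℝ) : ℂ) := by
      rw [hI]
      refine setIntegral_congr_fun measurableSet_Ioi fun t ht => ?_
      rw [sub_self, Complex.cpow_zero, one_mul]
      push_cast
      ring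
    rw [h1]; exact integral_ofReal
  rw [← huniq, hIval, Complex.ofReal_re]

lemma abs_log_le' {t : ℝ} (ht : 0 < t) : |Real.log t| ≤ 2 * t ^ (-(1:ℝ)/2) + t := by
  have hrp : (0:ℝ) < t ^ (-(1:ℝ)/2) := rpow_pos_of_pos ht _
  rcases le_or_gt 1 t with h | h
  · rw [abs_of_nonneg (Real.log_nonneg h)]
    have := Real.log_le_sub_one_of_pos ht
    nlinarith
  · rw [abs_of_nonpos (Real.log_nonpos ht.le h.le)]
    have h2 : Real.log (t ^ (-(1:ℝ)/2)) ≤ t ^ (-(1:ℝ)/2) - 1 := Real.log_le_sub_one_of_pos hrp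
    rw [Real.log_rpow ht] at h2
    nlinarith

lemma intOn_logexp : IntegrableOn (fun t => Real.log t * Real.exp (-t)) (Set.Ioi (0:ℝ)) := by
  have h1 : IntegrableOn (fun t : ℝ => Real.exp (-t) * t ^ ((1:ℝ)/2 - 1)) (Set.Ioi 0) :=
    Real.GammaIntegral_convergent (by norm_num)
  have h2 : IntegrableOn (fun t : ℝ => Real.exp (-t) * t ^ ((2:ℝ) - 1)) (Set.Ioi 0) :=
    Real.GammaIntegral_convergent (by norm_num)
  refine ((h1.const_mul 2).add h2).mono' ?_ ?_
  · exact ((Real.continuousOn_log.mono (fun x (hx : x ∈ Set.Ioi (0:ℝ)) => hx.out.ne')).mul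
      (Real.continuous_exp.comp continuous_neg).continuousOn).aestronglyMeasurable measurableSet_Ioi
  · filter_upwards [ae_restrict_mem measurableSet_Ioi] with t ht
    have ht0 : (0:ℝ) < t := ht
    simp only [Pi.add_apply]
    rw [Real.norm_eq_abs, abs_mul, abs_of_pos (exp_pos _)]
    have hb := abs_log_le' ht0
    have h12 : (1:ℝ)/2 - 1 = -(1:ℝ)/2 := by norm_num
    rw [h12]
    have ht1 : t ^ ((2:ℝ) - 1) = t := by norm_num
    rw [ht1]
    nlinarith [exp_pos (-t), mul_le_mul_of_nonneg_left hb (exp_pos (-t)).le]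

lemma tendsto_logexp_atTop : Tendsto (fun x => Real.log x * -Real.exp (-x)) atTop (𝓝 0) := by
  have hg : Tendsto (fun x : ℝ => x ^ 1 * Real.exp (-x)) atTop (𝓝 0) :=
    tendsto_pow_mul_exp_neg_atTop_nhds_zero 1
  refine squeeze_zero_norm' ?_ (by simpa using hg)
  filter_upwards [eventually_ge_atTop (1:ℝ)] with x hx
  rw [norm_mul, norm_neg, Real.norm_eq_abs, Real.norm_eq_abs,
    abs_of_nonneg (Real.log_nonneg hx), abs_of_pos (exp_pos _)]
  have h1 : Real.log x ≤ x := (Real.log_le_sub_one_of_pos (by linarith)).trans (by linarith)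
  nlinarith [exp_pos (-x)]

lemma expInt_ibp {s : ℝ} (hs : 0 < s) :
    expInt s = (∫ t in Set.Ioi s, Real.log t * Real.exp (-t)) - Real.exp (-s) * Real.log s := by
  have key := integral_Ioi_deriv_mul_eq_sub (a := s)
    (u := Real.log) (u' := fun x => x⁻¹)
    (v := fun x => -Real.exp (-x)) (v' := fun x => Real.exp (-x))
    (a' := Real.log s * -Real.exp (-s)) (b' := 0)
    (fun x hx => Real.hasDerivAt_log (lt_trans hs hx).ne')
    (fun x hx => ((Real.hasDerivAt_exp (-x)).comp x (hasDerivAt_neg x)).neg.congr_deriv (by simp))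
    ?_ ?_ ?_
  · have hsplit : (∫ x in Set.Ioi s, (x⁻¹ * -Real.exp (-x) + Real.log x * Real.exp (-x)))
        = (∫ x in Set.Ioi s, Real.log x * Real.exp (-x)) - ∫ x in Set.Ioi s, Real.exp (-x) / x := by
      rw [← integral_sub (intOn_logexp.mono_set (Set.Ioi_subset_Ioi hs.le)) (intOn_exp_div hs)]
      refine setIntegral_congr_fun measurableSet_Ioi fun x hx => ?_
      ring
    have h3 : (∫ x in Set.Ioi s, (x⁻¹ * -Real.exp (-x) + Real.log x * Real.exp (-x)))
        = 0 - Real.log s * -Real.exp (-s) := key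
    rw [hsplit] at h3
    rw [expInt]
    linarith [h3]
  · refine MeasureTheory.IntegrableOn.congr_fun
      (((intOn_exp_div hs).neg).add (intOn_logexp.mono_set (Set.Ioi_subset_Ioi hs.le)))
      ?_ measurableSet_Ioi
    intro x hx
    simp only [Pi.add_apply, Pi.mul_apply, Pi.neg_apply]
    ring
  · refine Filter.Tendsto.mono_left ?_ nhdsWithin_le_nhds
    exact ((Real.continuousAt_log hs.ne').mul
      ((Real.continuous_exp.comp continuous_neg).continuousAt.neg)).tendsto
  · exact tendsto_logexp_atTop

lemma J_tendsto :
    Tendsto (fun s => ∫ t in Set.Ioi s, Real.log t * Real.exp (-t)) (𝓝[>] (0:ℝ))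
      (𝓝 (-Real.eulerMascheroniConstant)) := by
  set f0 : ℝ → ℝ := (Set.Ioi (0:ℝ)).indicator (fun t => Real.log t * Real.exp (-t)) with hf0
  have hint : Integrable f0 := (integrable_indicator_iff measurableSet_Ioi).mpr intOn_logexp
  have hcont : Continuous (fun s => ∫ x in (0:ℝ)..s, f0 x) := hint.continuous_primitive 0
  have h0 : Tendsto (fun s => ∫ x in (0:ℝ)..s, f0 x) (𝓝[>] (0:ℝ)) (𝓝 0) := by
    have := (hcont.tendsto 0).mono_left (nhdsWithin_le_nhds (s := Set.Ioi (0:ℝ)))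
    simpa using this
  have key : ∀ s : ℝ, 0 < s →
      (∫ t in Set.Ioi s, Real.log t * Real.exp (-t))
        = (∫ t in Set.Ioi (0:ℝ), Real.log t * Real.exp (-t)) - ∫ x in (0:ℝ)..s, f0 x := by
    intro s hspos
    have hsplit : (∫ t in Set.Ioi (0:ℝ), Real.log t * Real.exp (-t))
        = (∫ t in Set.Ioc (0:ℝ) s, Real.log t * Real.exp (-t))
          + ∫ t in Set.Ioi s, Real.log t * Real.exp (-t) := by
      rw [← setIntegral_union (Set.Ioc_disjoint_Ioi le_rfl) measurableSet_Ioi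
        (intOn_logexp.mono_set Set.Ioc_subset_Ioi_self)
        (intOn_logexp.mono_set (Set.Ioi_subset_Ioi hspos.le)),
        Set.Ioc_union_Ioi_eq_Ioi hspos.le]
    have hIoc : (∫ x in (0:ℝ)..s, f0 x) = ∫ t in Set.Ioc (0:ℝ) s, Real.log t * Real.exp (-t) := by
      rw [intervalIntegral.integral_of_le hspos.le]
      refine setIntegral_congr_fun measurableSet_Ioc fun x hx => ?_
      exact Set.indicator_of_mem hx.1 _
    rw [hIoc]
    linarith [hsplit]
  have h1 := (tendsto_const_nhds (x := ∫ t in Set.Ioi (0:ℝ), Real.log t * Real.exp (-t))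
      (f := 𝓝[>] (0:ℝ))).sub h0
  rw [sub_zero] at h1
  rw [← gammaInt]
  refine h1.congr' ?_
  filter_upwards [self_mem_nhdsWithin] with s hs
  rw [← key s hs]

lemma tendsto_one_sub_exp_mul_log :
    Tendsto (fun s => (1 - Real.exp (-s)) * Real.log s) (𝓝[>] (0:ℝ)) (𝓝 0) := by
  have hg : Tendsto (fun s : ℝ => ‖Real.log s * s‖) (𝓝[>] (0:ℝ)) (𝓝 0) := by
    have := (tendsto_log_mul_rpow_nhdsGT_zero one_pos).norm
    simpa using this
  refine squeeze_zero_norm' ?_ hg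
  filter_upwards [self_mem_nhdsWithin] with s hs
  have hs0 : (0:ℝ) < s := hs
  have h1 : Real.exp (-s) ≤ 1 := Real.exp_le_one_iff.mpr (by linarith)
  have h2 : 1 - Real.exp (-s) ≤ s := by nlinarith [Real.add_one_le_exp (-s)]
  simp only [norm_mul, Real.norm_eq_abs]
  rw [abs_of_nonneg (by linarith : (0:ℝ) ≤ 1 - Real.exp (-s)), abs_of_pos hs0]
  nlinarith [abs_nonneg (Real.log s)]

lemma tendsto_exp_sub_one_div :
    Tendsto (fun s => (Real.exp (-s) - 1) / s) (𝓝[>] (0:ℝ)) (𝓝 (-1)) := by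
  have h : HasDerivAt (fun s : ℝ => Real.exp (-s)) (-1) 0 := by
    have h0 : HasDerivAt (fun s : ℝ => -s) (-1) 0 := by simpa using (hasDerivAt_neg (0:ℝ))
    exact ((Real.hasDerivAt_exp (-(0:ℝ))).comp 0 h0).congr_deriv (by simp)
  rw [hasDerivAt_iff_tendsto_slope] at h
  have h2 := h.mono_left (nhdsWithin_mono (0:ℝ)
    (fun x (hx : x ∈ Set.Ioi (0:ℝ)) => Set.mem_compl_singleton_iff.mpr hx.out.ne'))
  refine h2.congr' ?_
  filter_upwards [self_mem_nhdsWithin] with s hs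
  simp [slope_def_field]

lemma phi_tendsto :
    Tendsto (fun s => (Real.exp (-s) - 1) / s - (expInt s + Real.log s)) (𝓝[>] (0:ℝ))
      (𝓝 (Real.eulerMascheroniConstant - 1)) := by
  have hEI : Tendsto (fun s => expInt s + Real.log s) (𝓝[>] (0:ℝ))
      (𝓝 (-Real.eulerMascheroniConstant)) := by
    have h := J_tendsto.add tendsto_one_sub_exp_mul_log
    rw [add_zero] at h
    refine h.congr' ?_
    filter_upwards [self_mem_nhdsWithin] with s hs
    rw [expInt_ibp hs]; ring
  have h := tendsto_exp_sub_one_div.sub hEI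
  convert h using 2
  ring

end aux

/-- The radial function
`g(r) = (1/16)((e^{-r²}-1)/r² - E₁(r²) - 2 log r)` satisfies
`g'' + (3/r) g' = (e^{-r²}-1)/(4r²)` for `r > 0`, with
`g'(r) = (1/8)(1/r³ - e^{-r²}/r³ - 1/r)` and `g(r) → (γ-1)/16` as `r → 0⁺`. -/
theorem radial_ode_biharmonic4
    (g : ℝ → ℝ)
    (hg : ∀ r : ℝ, 0 < r → g r =
      (1 / 16) * ((Real.exp (-r ^ 2) - 1) / r ^ 2 - expInt (r ^ 2) - 2 * Real.log r)) :
    (∀ r : ℝ, 0 < r →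
        deriv (deriv g) r + (3 / r) * deriv g r = (Real.exp (-r ^ 2) - 1) / (4 * r ^ 2)) ∧
    (∀ r : ℝ, 0 < r →
        deriv g r = (1 / 8) * (1 / r ^ 3 - Real.exp (-r ^ 2) / r ^ 3 - 1 / r)) ∧
    Tendsto g (nhdsWithin 0 (Set.Ioi 0))
      (nhds ((Real.eulerMascheroniConstant - 1) / 16)) := by
  have hgd : ∀ r : ℝ, 0 < r →
      HasDerivAt g ((1 / 8) * (1 / r ^ 3 - Real.exp (-r ^ 2) / r ^ 3 - 1 / r)) r := by
    intro r hr
    refine (hasDerivAt_gformula hr).congr_of_eventuallyEq ?_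
    filter_upwards [isOpen_Ioi.mem_nhds hr] with x hx
    exact hg x hx
  have part2 : ∀ r : ℝ, 0 < r →
      deriv g r = (1 / 8) * (1 / r ^ 3 - Real.exp (-r ^ 2) / r ^ 3 - 1 / r) :=
    fun r hr => (hgd r hr).deriv
  refine ⟨?_, part2, ?_⟩
  · intro r hr
    have hev : deriv g =ᶠ[nhds r]
        (fun x => (1 / 8) * (1 / x ^ 3 - Real.exp (-x ^ 2) / x ^ 3 - 1 / x)) := by
      filter_upwards [isOpen_Ioi.mem_nhds hr] with x hx
      exact part2 x hx
    rw [hev.deriv_eq, (hasDerivAt_G hr).deriv, part2 r hr]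
    have hr2 : r ≠ 0 := hr.ne'
    field_simp
    ring
  · have hsq : Tendsto (fun r : ℝ => r ^ 2) (nhdsWithin 0 (Set.Ioi 0))
        (nhdsWithin 0 (Set.Ioi 0)) := by
      refine tendsto_nhdsWithin_of_tendsto_nhds_of_eventually_within _ ?_ ?_
      · have h := (continuous_pow 2).tendsto (0:ℝ)
        simp only [ne_eq, OfNat.ofNat_ne_zero, not_false_eq_true, zero_pow] at h
        exact h.mono_left nhdsWithin_le_nhds
      · filter_upwards [self_mem_nhdsWithin] with r hr
        exact pow_pos (Set.mem_Ioi.mp hr) 2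
    have hφ := (phi_tendsto.comp hsq).const_mul (1/16 : ℝ)
    have : (1/16 : ℝ) * (Real.eulerMascheroniConstant - 1)
        = (Real.eulerMascheroniConstant - 1) / 16 := by ring
    rw [this] at hφ
    refine hφ.congr' ?_
    filter_upwards [self_mem_nhdsWithin] with r hr
    rw [hg r hr]
    have hlog : Real.log (r ^ 2) = 2 * Real.log r := by
      rw [Real.log_pow]; norm_num
    simp only [Function.comp]
    rw [hlog]
    ring
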